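/- Let G be a finite weighted directed graph with weights in a unital quantale Σ, T a tree decomposition of G, u and v nodes of G, B_u a bag of T containing u and B_v a bag of T containing v. Then for every bag B lying on the unique simple path in T from B_u to B_v (including the endpoints), d(u, v) = ⨆_{x ∈ B} d(u, x) ⊗ d(x, v). -/

import Mathlib

/-- A path from `u` to `v` in the directed graph with edge relation `E`. -/
def IsPath {V : Type*} (E : V → V → Prop) (u v : V) (l : List V) : Prop :=
  l ≠ [] ∧ l.head? = some u ∧ l.getLast? = some v ∧ l.Chain' E

/-- The weight of a path: the ordered product of the weights of its edges,
`1` for a 0-length path. -/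
def pathWeight {V M : Type*} [Monoid M] (wt : V → V → M) (l : List V) : M :=
  ((l.zip l.tail).map fun p => wt p.1 p.2).prod

lemma pathWeight_cons_cons {V Q : Type*} [Monoid Q] (wt : V → V → Q) (a b : V) (l : List V) :
    pathWeight wt (a :: b :: l) = wt a b * pathWeight wt (b :: l) := rfl

lemma pathWeight_single {V Q : Type*} [Monoid Q] (wt : V → V → Q) (x : V) :
    pathWeight wt [x] = 1 := rfl

lemma pathWeight_split {V Q : Type*} [Monoid Q] (wt : V → V → Q) (x : V) :
    ∀ (l1 l2 : List V),
    pathWeight wt (l1 ++ x :: l2) = pathWeight wt (l1 ++ [x]) * pathWeight wt (x :: l2)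
  | [], l2 => by simp [pathWeight_single]
  | [a], l2 => by
      simp only [List.cons_append, List.nil_append, pathWeight_cons_cons, pathWeight_single,
        mul_one]
  | a :: b :: t, l2 => by
      have ih := pathWeight_split wt x (b :: t) l2
      simp only [List.cons_append] at ih ⊢
      rw [pathWeight_cons_cons, pathWeight_cons_cons, ih, mul_assoc]

lemma isPath_split {V : Type*} {E : V → V → Prop} {u v x : V} {l1 l2 : List V}
    (h : IsPath E u v (l1 ++ x :: l2)) :
    IsPath E u x (l1 ++ [x]) ∧ IsPath E x v (x :: l2) := by
  obtain ⟨-, hh, hlast, hc⟩ := h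
  have hc' := List.isChain_split.1 hc
  refine ⟨⟨by simp, ?_, ?_, hc'.1⟩, ⟨by simp, rfl, ?_, hc'.2⟩⟩
  · cases l1 <;> simpa using hh
  · rw [List.getLast?_append_of_ne_nil _ (by simp : ([x] : List V) ≠ [])]; rfl
  · rwa [List.getLast?_append_of_ne_nil _ (by simp : (x :: l2) ≠ [])] at hlast

lemma isPath_concat {V Q : Type*} [Monoid Q] (wt : V → V → Q) {E : V → V → Prop}
    {u x v : V} {l m : List V} (hl : IsPath E u x l) (hm : IsPath E x v m) :
    ∃ n, IsPath E u v n ∧ pathWeight wt n = pathWeight wt l * pathWeight wt m := by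
  obtain ⟨hlne, hlh, hll, hlc⟩ := hl
  obtain ⟨hmne, hmh, hml, hmc⟩ := hm
  obtain ⟨m', rfl⟩ : ∃ m', m = x :: m' := by
    cases m with
    | nil => exact absurd rfl hmne
    | cons a t =>
      obtain rfl : a = x := by simpa using hmh
      exact ⟨t, rfl⟩
  obtain ⟨l1, rfl⟩ : ∃ l1, l = l1 ++ [x] := by
    refine ⟨l.dropLast, (List.dropLast_append_getLast? x ?_).symm⟩
    rw [hll]; rfl
  refine ⟨l1 ++ x :: m', ⟨by simp, ?_, ?_, ?_⟩, pathWeight_split wt x l1 m'⟩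
  · cases l1 <;> simpa using hlh
  · rw [List.getLast?_append_of_ne_nil _ (by simp : (x :: m') ≠ [])]; exact hml
  · exact List.isChain_split.2 ⟨hlc, hmc⟩
/-- The algebraic distance: supremum of the weights of all paths from `u` to `v`. -/
def gdist {V Q : Type*} [CompleteLattice Q] [Monoid Q]
    (E : V → V → Prop) (wt : V → V → Q) (u v : V) : Q :=
  ⨆ l ∈ {l : List V | IsPath E u v l}, pathWeight wt l

/-- A tree decomposition of the graph with node set `V` and edge relation `E`. -/
structure TreeDecomp (V : Type*) (E : V → V → Prop) (ι : Type*) where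
  T : SimpleGraph ι
  isTree : T.IsTree
  bag : ι → Set V
  covers_nodes : ∀ v, ∃ i, v ∈ bag i
  covers_edges : ∀ u v, E u v → ∃ i, u ∈ bag i ∧ v ∈ bag i
  bags_connected : ∀ v, (T.induce {i | v ∈ bag i}).Connected

lemma chain_reach {V ι : Type*} {E : V → V → Prop} (td : TreeDecomp V E ι) (B : ι)
    (Rb : ι → ι → Prop)
    (hbag : ∀ w, w ∉ td.bag B → ∀ i j, w ∈ td.bag i → w ∈ td.bag j → Rb i j)
    (htrans : ∀ i j k, Rb i j → Rb j k → Rb i k) :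
    ∀ (l : List V), l.Chain' E → (∀ x ∈ l, x ∉ td.bag B) →
      ∀ a b j k, l.head? = some a → l.getLast? = some b →
        a ∈ td.bag j → b ∈ td.bag k → Rb j k := by
  intro l
  induction l with
  | nil => intro _ _ a b j k ha; simp at ha
  | cons c t ih =>
    intro hc hav a b j k ha hb hj hk
    obtain rfl : c = a := by simpa using ha
    cases t with
    | nil =>
      obtain rfl : c = b := by simpa using hb
      exact hbag c (hav c (by simp)) j k hj hk
    | cons d t' =>
      have hE : E c d := (List.isChain_cons_cons.1 hc).1
      obtain ⟨m, hma, hmd⟩ := td.covers_edges c d hE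
      have h1 : Rb j m := hbag c (hav c (by simp)) j m hj hma
      have h2 : Rb m k := ih (List.isChain_cons_cons.1 hc).2
        (fun x hx => hav x (List.mem_cons_of_mem _ hx)) d b m k rfl
        (by simpa using hb) hmd hk
      exact htrans _ _ _ h1 h2

/-- Let G be a finite weighted directed graph with weights in a unital
quantale Σ, T a tree decomposition of G, u and v nodes of G, B_u a bag of T containing u
and B_v a bag of T containing v. Then for every bag B lying on the unique simple path in
T from B_u to B_v (including the endpoints), d(u, v) = ⨆_{x ∈ B} d(u, x) ⊗ d(x, v). -/
theorem stmt_4 {V ι Q : Type*} [Fintype V] [Fintype ι] [CompleteLattice Q] [Monoid Q]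
    (hdl : ∀ (a : Q) (S : Set Q), a * sSup S = ⨆ s ∈ S, a * s)
    (hdr : ∀ (a : Q) (S : Set Q), sSup S * a = ⨆ s ∈ S, s * a)
    (E : V → V → Prop) (wt : V → V → Q) (td : TreeDecomp V E ι)
    (u v : V) (iu iv : ι) (hu : u ∈ td.bag iu) (hv : v ∈ td.bag iv)
    (p : td.T.Walk iu iv) (hp : p.IsPath) (B : ι) (hB : B ∈ p.support) :
    gdist E wt u v = ⨆ x ∈ td.bag B, gdist E wt u x * gdist E wt x v := by
  classical
  -- multiplication is monotone
  have hmono : ∀ a b c d : Q, a ≤ b → c ≤ d → a * c ≤ b * d := by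
    intro a b c d hab hcd
    have h1 : a * c ≤ a * d := by
      have h := hdl a {c, d}
      rw [sSup_pair, sup_eq_right.2 hcd] at h
      rw [h]
      exact le_iSup₂_of_le c (by simp) le_rfl
    have h2 : a * d ≤ b * d := by
      have h := hdr d {a, b}
      rw [sSup_pair, sup_eq_right.2 hab] at h
      rw [h]
      exact le_iSup₂_of_le a (by simp) le_rfl
    exact h1.trans h2
  -- reachability in the tree avoiding B
  set Rb : ι → ι → Prop := fun i j => ∃ w : td.T.Walk i j, B ∉ w.support with hRb
  have hbag : ∀ w, w ∉ td.bag B → ∀ i j, w ∈ td.bag i → w ∈ td.bag j → Rb i j := by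
    intro w hwB i j hi hj
    obtain ⟨q⟩ := (td.bags_connected w).preconnected ⟨i, hi⟩ ⟨j, hj⟩
    refine ⟨q.map ⟨Subtype.val, fun {a b} h => h⟩, ?_⟩
    rw [SimpleGraph.Walk.support_map]
    intro hmem
    obtain ⟨⟨k, hk⟩, -, rfl⟩ := List.mem_map.1 hmem
    exact hwB hk
  have htrans : ∀ i j k, Rb i j → Rb j k → Rb i k := by
    rintro i j k ⟨w1, h1⟩ ⟨w2, h2⟩
    refine ⟨w1.append w2, ?_⟩
    rw [SimpleGraph.Walk.support_append]
    intro hmem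
    rcases List.mem_append.1 hmem with h | h
    · exact h1 h
    · exact h2 (List.mem_of_mem_tail h)
  have hnotRb : ¬ Rb iu iv := by
    rintro ⟨w, hw⟩
    apply hw
    have heq : w.toPath = (⟨p, hp⟩ : td.T.Path iu iv) :=
      td.isTree.IsAcyclic.path_unique _ _
    have hsub := SimpleGraph.Walk.support_toPath_subset w
    rw [heq] at hsub
    exact hsub hB
  -- separator property
  have hsep : ∀ l, IsPath E u v l → ∃ x ∈ td.bag B, x ∈ l := by
    intro l hl
    by_contra hcon
    push_neg at hcon
    have hav : ∀ x ∈ l, x ∉ td.bag B := fun x hx hxB => hcon x hxB hx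
    exact hnotRb (chain_reach td B Rb hbag htrans l hl.2.2.2 hav u v iu iv
      hl.2.1 hl.2.2.1 hu hv)
  apply le_antisymm
  · refine iSup₂_le fun l hl => ?_
    obtain ⟨x, hxB, hxl⟩ := hsep l hl
    obtain ⟨l1, l2, rfl⟩ := List.append_of_mem hxl
    obtain ⟨h1, h2⟩ := isPath_split hl
    rw [pathWeight_split]
    refine le_trans (hmono _ _ _ _ ?_ ?_) (le_iSup₂_of_le x hxB le_rfl)
    · exact le_iSup₂_of_le (l1 ++ [x]) h1 le_rfl
    · exact le_iSup₂_of_le (x :: l2) h2 le_rfl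
  · refine iSup₂_le fun x _ => ?_
    have e1 : gdist E wt u x = sSup (pathWeight wt '' {l | IsPath E u x l}) :=
      sSup_image.symm
    have e2 : gdist E wt x v = sSup (pathWeight wt '' {m | IsPath E x v m}) :=
      sSup_image.symm
    rw [e1, hdr]
    refine iSup₂_le fun q hq => ?_
    obtain ⟨l, hl, rfl⟩ := hq
    rw [e2, hdl]
    refine iSup₂_le fun r hr => ?_
    obtain ⟨m, hm, rfl⟩ := hr
    obtain ⟨n, hn, hw⟩ := isPath_concat wt hl hm
    rw [← hw]
    exact le_iSup₂_of_le n hn le_rfl
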